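/- For all natural numbers s ≥ 1, q ≥ 0, and all x: (-1)^{(s+1)q} · L_s(x) · Σ_{n=0}^{q} (-1)^{(s+1)n} F_{sn}(x)² = F_{s(q+1)}(x) · F_{sq}(x). -/

import Mathlib

/-- Fibonacci polynomials evaluated at a real `x`. -/
def fibP : ℕ → ℝ → ℝ
  | 0, _ => 0
  | 1, _ => 1
  | n + 2, x => x * fibP (n + 1) x + fibP n x

/-- Lucas polynomials evaluated at a real `x`. -/
def lucasP : ℕ → ℝ → ℝ
  | 0, _ => 2
  | 1, x => x
  | n + 2, x => x * lucasP (n + 1) x + lucasP n x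

lemma fibP_add_two (n : ℕ) (x : ℝ) :
    fibP (n + 2) x = x * fibP (n + 1) x + fibP n x := rfl

lemma lucasP_add_two (n : ℕ) (x : ℝ) :
    lucasP (n + 2) x = x * lucasP (n + 1) x + lucasP n x := rfl

lemma key (x : ℝ) : ∀ k n : ℕ,
    lucasP k x * fibP (n + k) x = fibP (n + 2 * k) x + (-1 : ℝ) ^ k * fibP n x := by
  intro k
  induction k using Nat.twoStepInduction with
  | zero => intro n; simp [lucasP]; ring_nf
  | one =>
    intro n
    have h : fibP (n + 2 * 1) x = x * fibP (n + 1) x + fibP n x := fibP_add_two n x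
    simp [lucasP, h]
  | more k ih1 ih2 =>
    intro n
    have h1 := ih1 (n + 2)
    have h2 := ih2 (n + 1)
    have e1 : n + 2 + k = n + (k + 2) := by ring
    have e2 : n + 1 + (k + 1) = n + (k + 2) := by ring
    rw [e1] at h1
    rw [e2] at h2
    have hf : fibP (n + 2) x = x * fibP (n + 1) x + fibP n x := fibP_add_two n x
    have hl : lucasP (k + 2) x = x * lucasP (k + 1) x + lucasP k x := lucasP_add_two k x
    have e3 : n + 2 + 2 * k = n + 2 * k + 2 := by ring
    have e4 : n + 1 + 2 * (k + 1) = n + 2 * k + 3 := by ring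
    have e6 : n + 2 * (k + 2) = n + 2 * k + 2 + 2 := by ring
    have hr : fibP (n + 2 * (k + 2)) x
        = x * fibP (n + 2 * k + 3) x + fibP (n + 2 * k + 2) x := by
      rw [e6, fibP_add_two]
    calc lucasP (k + 2) x * fibP (n + (k + 2)) x
        = x * (lucasP (k + 1) x * fibP (n + (k + 2)) x)
          + lucasP k x * fibP (n + (k + 2)) x := by rw [hl]; ring
      _ = x * (fibP (n + 1 + 2 * (k + 1)) x + (-1:ℝ)^(k+1) * fibP (n+1) x)
          + (fibP (n + 2 + 2 * k) x + (-1:ℝ)^k * fibP (n+2) x) := by rw [h1, h2]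
      _ = fibP (n + 2 * (k + 2)) x + (-1:ℝ)^(k+2) * fibP n x := by
          have pa1 : (-1:ℝ)^(k+1) = -(-1:ℝ)^k := by rw [pow_succ]; ring
          have pa2 : (-1:ℝ)^(k+2) = (-1:ℝ)^k := by rw [pow_add]; norm_num
          rw [e3, e4, hr, hf, pa1, pa2]
          ring

theorem stmt_8 (s q : ℕ) (hs : 1 ≤ s) (x : ℝ) :
    (-1 : ℝ) ^ ((s + 1) * q) * lucasP s x *
        ∑ n ∈ Finset.range (q + 1), (-1 : ℝ) ^ ((s + 1) * n) * (fibP (s * n) x) ^ 2 =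
      fibP (s * (q + 1)) x * fibP (s * q) x := by
  induction q with
  | zero => simp [fibP, mul_comm]
  | succ q ih =>
    rw [Finset.sum_range_succ]
    have hkey := key x s (s * q)
    have es : s * q + s = s * (q + 1) := by ring
    have es2 : s * q + 2 * s = s * (q + 2) := by ring
    rw [es, es2] at hkey
    have hp : ((-1:ℝ)) ^ ((s+1) * (q+1)) = (-1:ℝ)^((s+1)*q) * (-1:ℝ)^(s+1) := by
      rw [← pow_add, Nat.mul_succ]
    have hA2 : (-1:ℝ)^((s+1)*q) * (-1:ℝ)^((s+1)*q) = 1 := by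
      rw [← pow_add, ← two_mul, pow_mul]; norm_num
    have hB2 : (-1:ℝ)^(s+1) * (-1:ℝ)^(s+1) = 1 := by
      rw [← pow_add, ← two_mul, pow_mul]; norm_num
    have hB : (-1:ℝ)^(s+1) = -(-1:ℝ)^s := by rw [pow_succ]; ring
    rw [hp]
    linear_combination ((-1:ℝ)^(s+1)) * ih + (fibP (s*(q+1)) x) * hkey
      + (fibP (s*q) x * fibP (s*(q+1)) x) * hB
      + (lucasP s x * (fibP (s*(q+1)) x)^2 * ((-1:ℝ)^(s+1))^2) * hA2
      + (lucasP s x * (fibP (s*(q+1)) x)^2) * hB2
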